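/- Let A be an m×N matrix with rational entries, let c ∈ ℚ^N, and let Z ⊆ {1,…,N}. Define the polyhedron P = {x ∈ ℝ^N : x_i ≥ 0 for all i, Ax = 0, x_i = 0 for all i ∈ Z, and c·x ≥ 1}. Suppose P is nonempty and that for every coordinate i ∉ Z there is no point x ∈ P with x_i = 0. Then there exists a vector r with all rational coordinates such that r ≥ 0 componentwise, Ar = 0, r_i = 0 for all i ∈ Z, c·r = 1, and P = {t·r : t ∈ ℝ, t ≥ 1}. In particular, any two points of P are positive real multiples of one another, and P contains a point with all rational coordinates. -/

import Mathlib

open Matrix in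
lemma exists_rat_solution' {K n : Type*} [Fintype K] [DecidableEq K] [Fintype n] [DecidableEq n]
    (B : Matrix K n ℚ) (b : K → ℚ) (x : n → ℝ)
    (hx : (B.map ((↑) : ℚ → ℝ)).mulVec x = fun k => (b k : ℝ)) :
    ∃ q : n → ℚ, B.mulVec q = b := by
  by_contra h
  have hb : b ∉ LinearMap.range B.mulVecLin := by
    rintro ⟨q, hq⟩; exact h ⟨q, hq⟩
  obtain ⟨f, hfb, hfW⟩ := Submodule.exists_dual_map_eq_bot_of_notMem hb inferInstance
  set y : K → ℚ := fun k => f (Pi.single k 1) with hy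
  have hfv : ∀ v : K → ℚ, f v = ∑ k, v k * y k := by
    intro v
    conv_lhs => rw [pi_eq_sum_univ v]
    rw [map_sum]
    refine Finset.sum_congr rfl fun k _ => ?_
    rw [_root_.map_smul, smul_eq_mul]
    congr 2
    funext j
    simp [Pi.single_apply, eq_comm]
  have hcol : ∀ j, ∑ k, y k * B k j = 0 := by
    intro j
    have h0 : B.mulVec (Pi.single j 1) ∈ LinearMap.range B.mulVecLin := ⟨_, rfl⟩
    have h1 : f (B.mulVec (Pi.single j 1)) = 0 := by
      have h2 := Submodule.mem_map_of_mem (f := f) h0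
      rw [hfW] at h2
      simpa using h2
    rw [hfv] at h1
    simpa [Matrix.mulVec_single, mul_comm] using h1
  have hyb : ∑ k, y k * b k ≠ 0 := by
    rw [hfv] at hfb; simpa [mul_comm] using hfb
  have hzero : (∑ k, (y k : ℝ) * (b k : ℝ)) = 0 := by
    have hxk : ∀ k, ((B.map ((↑) : ℚ → ℝ)).mulVec x) k = (b k:ℝ) := fun k => congrFun hx k
    have : ∑ k, (y k:ℝ) * (b k:ℝ) = ∑ j, (∑ k, (y k:ℝ) * (B k j:ℝ)) * x j := by
      simp only [← hxk]
      simp only [Matrix.mulVec, dotProduct, Matrix.map_apply, Finset.mul_sum,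
        Finset.sum_mul]
      rw [Finset.sum_comm]
      congr 1; ext j; congr 1; ext k; ring
    rw [this]
    apply Finset.sum_eq_zero
    intro j _
    have hc : ((∑ k, y k * B k j : ℚ) : ℝ) = 0 := by rw [hcol j]; norm_num
    push_cast at hc
    rw [hc, zero_mul]
  exact hyb (by exact_mod_cast hzero)

private lemma sum_mul_smul' {N : ℕ} (c : Fin N → ℚ) (t : ℝ) (x : Fin N → ℝ) :
    ∑ i, (c i:ℝ) * (t • x) i = t * ∑ i, (c i:ℝ) * x i := by
  rw [Finset.mul_sum]
  refine Finset.sum_congr rfl fun i _ => ?_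
  simp only [Pi.smul_apply, smul_eq_mul]
  ring

/-- key step: two slice points with a strictly smaller coordinate give contradiction -/
private lemma slice_step {m N : ℕ} (A : Matrix (Fin m) (Fin N) ℚ) (c : Fin N → ℚ)
    (Z : Set (Fin N)) (P : Set (Fin N → ℝ))
    (hP : P = {x | (∀ i, 0 ≤ x i) ∧ (A.map ((↑) : ℚ → ℝ)).mulVec x = 0 ∧
      (∀ i ∈ Z, x i = 0) ∧ 1 ≤ ∑ i, (c i : ℝ) * x i})
    (hmax : ∀ i ∉ Z, ¬ ∃ x ∈ P, x i = 0)
    {u v : Fin N → ℝ} (hu : u ∈ P) (hv : v ∈ P)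
    (hu1 : ∑ i, (c i:ℝ) * u i = 1) (hv1 : ∑ i, (c i:ℝ) * v i = 1)
    (hlt : ∃ j, u j < v j) : False := by
  classical
  obtain ⟨j, hj⟩ := hlt
  set S : Finset (Fin N) := Finset.univ.filter (fun i => u i < v i) with hS
  have hjS : j ∈ S := by simp [hS, hj]
  obtain ⟨j₀, hj₀S, hj₀min⟩ := S.exists_min_image (fun i => u i / (v i - u i)) ⟨j, hjS⟩
  have hj₀lt : u j₀ < v j₀ := by simpa [hS] using hj₀S
  rw [hP] at hu hv
  obtain ⟨hu0, huA, huZ, -⟩ := hu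
  obtain ⟨hv0, hvA, hvZ, -⟩ := hv
  set t : ℝ := u j₀ / (v j₀ - u j₀) with ht
  have hd : 0 < v j₀ - u j₀ := by linarith
  have ht0 : 0 ≤ t := div_nonneg (hu0 j₀) hd.le
  set w : Fin N → ℝ := (1 + t) • u - t • v with hw
  have hwi : ∀ i, w i = u i + t * (u i - v i) := by
    intro i
    simp only [hw, Pi.sub_apply, Pi.smul_apply, smul_eq_mul]
    ring
  have hwj₀ : w j₀ = 0 := by
    rw [hwi]
    have h2 : t * (v j₀ - u j₀) = u j₀ := div_mul_cancel₀ _ hd.ne'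
    have h3 : t * (u j₀ - v j₀) = -(t * (v j₀ - u j₀)) := by ring
    linarith
  have hw0 : ∀ i, 0 ≤ w i := by
    intro i
    rw [hwi]
    by_cases hiS : u i < v i
    · have hdi : 0 < v i - u i := by linarith
      have hmin : t ≤ u i / (v i - u i) := hj₀min i (by simp [hS, hiS])
      have h4 : t * (v i - u i) ≤ u i := (le_div_iff₀ hdi).mp hmin
      have h5 : t * (u i - v i) = -(t * (v i - u i)) := by ring
      linarith
    · push_neg at hiS
      have : 0 ≤ t * (u i - v i) := mul_nonneg ht0 (by linarith)
      linarith [hu0 i]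
  have hwA : (A.map ((↑) : ℚ → ℝ)).mulVec w = 0 := by
    rw [hw, Matrix.mulVec_sub, Matrix.mulVec_smul, Matrix.mulVec_smul, huA, hvA]
    simp
  have hwZ : ∀ i ∈ Z, w i = 0 := by
    intro i hi
    rw [hwi, huZ i hi, hvZ i hi]
    ring
  have hwc : ∑ i, (c i:ℝ) * w i = 1 := by
    have h6 : ∀ i ∈ Finset.univ, (c i:ℝ) * w i
        = (1+t) * ((c i:ℝ) * u i) - t * ((c i:ℝ) * v i) := by
      intro i _
      rw [hwi]
      ring
    rw [Finset.sum_congr rfl h6, Finset.sum_sub_distrib, ← Finset.mul_sum, ← Finset.mul_sum,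
      hu1, hv1]
    ring
  have hj₀Z : j₀ ∉ Z := by
    intro hmem
    have := huZ j₀ hmem
    have := hvZ j₀ hmem
    linarith
  exact hmax j₀ hj₀Z ⟨w, by rw [hP]; exact ⟨hw0, hwA, hwZ, by rw [hwc]⟩, hwj₀⟩

/-- If the polyhedron
`P = {x : x ≥ 0, Ax = 0, x_i = 0 (i ∈ Z), c·x ≥ 1}` is nonempty and no point of `P`
has `x_i = 0` for a coordinate `i ∉ Z`, then `P` is the ray `{t • r : t ≥ 1}` for
some rational vector `r` with `r ≥ 0`, `Ar = 0`, `r_i = 0` on `Z`, and `c·r = 1`. -/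
theorem stmt_7 {m N : ℕ} (A : Matrix (Fin m) (Fin N) ℚ) (c : Fin N → ℚ)
    (Z : Set (Fin N))
    (P : Set (Fin N → ℝ))
    (hP : P = {x | (∀ i, 0 ≤ x i) ∧ (A.map ((↑) : ℚ → ℝ)).mulVec x = 0 ∧
      (∀ i ∈ Z, x i = 0) ∧ 1 ≤ ∑ i, (c i : ℝ) * x i})
    (hne : P.Nonempty)
    (hmax : ∀ i ∉ Z, ¬ ∃ x ∈ P, x i = 0) :
    ∃ r : Fin N → ℝ, (∀ i, ∃ q : ℚ, r i = (q : ℝ)) ∧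
      (∀ i, 0 ≤ r i) ∧ (A.map ((↑) : ℚ → ℝ)).mulVec r = 0 ∧
      (∀ i ∈ Z, r i = 0) ∧ (∑ i, (c i : ℝ) * r i) = 1 ∧
      P = {x | ∃ t : ℝ, 1 ≤ t ∧ x = t • r} := by
  classical
  -- uniqueness of slice points
  have huniq : ∀ u v : Fin N → ℝ, u ∈ P → v ∈ P →
      (∑ i, (c i:ℝ) * u i = 1) → (∑ i, (c i:ℝ) * v i = 1) → u = v := by
    intro u v hu hv hu1 hv1
    by_contra hne'
    have hex : ∃ j, u j ≠ v j := by
      by_contra hh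
      push_neg at hh
      exact hne' (funext hh)
    obtain ⟨j, hj⟩ := hex
    rcases lt_or_gt_of_ne hj with h | h
    · exact slice_step A c Z P hP hmax hu hv hu1 hv1 ⟨j, h⟩
    · exact slice_step A c Z P hP hmax hv hu hv1 hu1 ⟨j, h⟩
  -- base point
  obtain ⟨x₀, hx₀⟩ := hne
  have hx₀' := hx₀
  rw [hP] at hx₀'
  obtain ⟨hx₀0, hx₀A, hx₀Z, hx₀c⟩ := hx₀'
  set s : ℝ := ∑ i, (c i:ℝ) * x₀ i with hs
  have hs0 : 0 < s := lt_of_lt_of_le one_pos hx₀c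
  set r₀ : Fin N → ℝ := s⁻¹ • x₀ with hr₀
  have hr₀0 : ∀ i, 0 ≤ r₀ i := fun i => mul_nonneg (inv_nonneg.mpr hs0.le) (hx₀0 i)
  have hr₀A : (A.map ((↑) : ℚ → ℝ)).mulVec r₀ = 0 := by
    rw [hr₀, Matrix.mulVec_smul, hx₀A, smul_zero]
  have hr₀Z : ∀ i ∈ Z, r₀ i = 0 := by
    intro i hi
    simp [hr₀, Pi.smul_apply, hx₀Z i hi]
  have hr₀c : ∑ i, (c i:ℝ) * r₀ i = 1 := by
    rw [hr₀, sum_mul_smul' c s⁻¹ x₀, ← hs, inv_mul_cancel₀ hs0.ne']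
  have hr₀P : r₀ ∈ P := by
    rw [hP]
    exact ⟨hr₀0, hr₀A, hr₀Z, by rw [hr₀c]⟩
  have hr₀pos : ∀ i ∉ Z, 0 < r₀ i := by
    intro i hi
    rcases (hr₀0 i).lt_or_eq with h | h
    · exact h
    · exact absurd ⟨r₀, hr₀P, h.symm⟩ (hmax i hi)
  -- affine uniqueness
  have haff : ∀ y : Fin N → ℝ, (A.map ((↑) : ℚ → ℝ)).mulVec y = 0 → (∀ i ∈ Z, y i = 0) →
      (∑ i, (c i:ℝ) * y i = 1) → y = r₀ := by
    intro y hyA hyZ hyc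
    set T : Finset (Fin N) := Finset.univ.filter (fun i => y i < r₀ i) with hT
    have key : ∀ ε : ℝ, 0 < ε → (∀ i ∈ T, ε * (r₀ i - y i) ≤ r₀ i) → y = r₀ := by
      intro ε hε0 hεle
      set w : Fin N → ℝ := r₀ + ε • (y - r₀) with hw
      have hwi : ∀ i, w i = r₀ i + ε * (y i - r₀ i) := by
        intro i
        simp only [hw, Pi.add_apply, Pi.smul_apply, Pi.sub_apply, smul_eq_mul]
      have hw0 : ∀ i, 0 ≤ w i := by
        intro i
        rw [hwi]
        by_cases hiT : y i < r₀ i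
        · have h7 := hεle i (by simp [hT, hiT])
          have h8 : ε * (y i - r₀ i) = -(ε * (r₀ i - y i)) := by ring
          linarith
        · push_neg at hiT
          have : 0 ≤ ε * (y i - r₀ i) := mul_nonneg hε0.le (by linarith)
          linarith [hr₀0 i]
      have hwA : (A.map ((↑) : ℚ → ℝ)).mulVec w = 0 := by
        rw [hw, Matrix.mulVec_add, hr₀A, Matrix.mulVec_smul, Matrix.mulVec_sub, hyA, hr₀A]
        simp
      have hwZ : ∀ i ∈ Z, w i = 0 := by
        intro i hi
        rw [hwi, hyZ i hi, hr₀Z i hi]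
        ring
      have hwc : ∑ i, (c i:ℝ) * w i = 1 := by
        have h6 : ∀ i ∈ Finset.univ, (c i:ℝ) * w i
            = (1-ε) * ((c i:ℝ) * r₀ i) + ε * ((c i:ℝ) * y i) := by
          intro i _
          rw [hwi]
          ring
        rw [Finset.sum_congr rfl h6, Finset.sum_add_distrib, ← Finset.mul_sum, ← Finset.mul_sum,
          hr₀c, hyc]
        ring
      have hwP : w ∈ P := by
        rw [hP]
        exact ⟨hw0, hwA, hwZ, by rw [hwc]⟩
      have hweq : w = r₀ := huniq w r₀ hwP hr₀P hwc hr₀c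
      have : ε • (y - r₀) = 0 := by
        have := hweq
        rw [hw] at this
        calc ε • (y - r₀) = (r₀ + ε • (y - r₀)) - r₀ := by ring_nf
          _ = r₀ - r₀ := by rw [this]
          _ = 0 := sub_self r₀
      have h9 : y - r₀ = 0 := by
        rcases smul_eq_zero.mp this with h | h
        · exact absurd h hε0.ne'
        · exact h
      have := sub_eq_zero.mp h9
      exact this
    by_cases hTne : T.Nonempty
    · set ε : ℝ := T.inf' hTne (fun i => r₀ i / (2 * (r₀ i - y i))) with hε
      have hTpos : ∀ i ∈ T, 0 < r₀ i ∧ 0 < r₀ i - y i := by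
        intro i hi
        have hlt : y i < r₀ i := by simpa [hT] using hi
        have hiZ : i ∉ Z := by
          intro hmem
          have := hyZ i hmem
          have := hr₀Z i hmem
          linarith
        exact ⟨hr₀pos i hiZ, by linarith⟩
      have hε0 : 0 < ε := by
        rw [hε, Finset.lt_inf'_iff]
        intro i hi
        obtain ⟨h1, h2⟩ := hTpos i hi
        exact div_pos h1 (by linarith)
      have hεle : ∀ i ∈ T, ε * (r₀ i - y i) ≤ r₀ i := by
        intro i hi
        obtain ⟨h1, h2⟩ := hTpos i hi
        have h3 : ε ≤ r₀ i / (2 * (r₀ i - y i)) := hε ▸ Finset.inf'_le _ hi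
        have h4 : ε * (r₀ i - y i) ≤ (r₀ i / (2 * (r₀ i - y i))) * (r₀ i - y i) :=
          mul_le_mul_of_nonneg_right h3 h2.le
        have h5 : (r₀ i / (2 * (r₀ i - y i))) * (r₀ i - y i) = r₀ i / 2 := by
          field_simp
        linarith
      exact key ε hε0 hεle
    · -- T empty : y ≥ r₀ ≥ 0, so y ∈ P
      have hy0 : ∀ i, 0 ≤ y i := by
        intro i
        have : ¬ y i < r₀ i := by
          intro hlt
          exact hTne ⟨i, by simp [hT, hlt]⟩
        push_neg at this
        linarith [hr₀0 i]
      have hyP : y ∈ P := by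
        rw [hP]
        exact ⟨hy0, hyA, hyZ, by rw [hyc]⟩
      exact huniq y r₀ hyP hr₀P hyc hr₀c
  -- rational solution
  let B : Matrix (Fin m ⊕ Fin N ⊕ Unit) (Fin N) ℚ :=
    Matrix.of (Sum.elim (fun i j => A i j)
      (Sum.elim (fun i j => if i ∈ Z ∧ j = i then 1 else 0) (fun _ j => c j)))
  let b : (Fin m ⊕ Fin N ⊕ Unit) → ℚ := Sum.elim 0 (Sum.elim 0 1)
  have hBr : (B.map ((↑) : ℚ → ℝ)).mulVec r₀ = fun k => (b k : ℝ) := by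
    funext k
    rcases k with i | i | u
    · have := congrFun hr₀A i
      simpa [B, b, Matrix.mulVec, dotProduct, Matrix.map_apply] using this
    · by_cases hi : i ∈ Z
      · have : ∑ j, (if j = i then (1:ℝ) else 0) * r₀ j = r₀ i := by
          simp [ite_mul]
        simp only [B, b, Matrix.mulVec, dotProduct, Matrix.map_apply, Matrix.of_apply,
          Sum.elim_inr, Sum.elim_inl, hi, true_and]
        push_cast [apply_ite ((↑) : ℚ → ℝ)]
        rw [this, hr₀Z i hi]
        norm_num
      · simp only [B, b, Matrix.mulVec, dotProduct, Matrix.map_apply, Matrix.of_apply,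
          Sum.elim_inr, Sum.elim_inl, hi, false_and, if_false]
        norm_num
    · simpa [B, b, Matrix.mulVec, dotProduct, Matrix.map_apply] using hr₀c
  obtain ⟨q, hq⟩ := exists_rat_solution' B b r₀ hBr
  set qr : Fin N → ℝ := fun i => (q i : ℝ) with hqr
  have hqA : (A.map ((↑) : ℚ → ℝ)).mulVec qr = 0 := by
    funext i
    have h1 : ∑ j, A i j * q j = 0 := by
      have := congrFun hq (Sum.inl i)
      simpa [B, b, Matrix.mulVec, dotProduct] using this
    have : ((∑ j, A i j * q j : ℚ) : ℝ) = 0 := by rw [h1]; norm_num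
    push_cast at this
    simpa [Matrix.mulVec, dotProduct, Matrix.map_apply, hqr] using this
  have hqZ : ∀ i ∈ Z, qr i = 0 := by
    intro i hi
    have h1 : ∑ j, (if i ∈ Z ∧ j = i then (1:ℚ) else 0) * q j = 0 := by
      have := congrFun hq (Sum.inr (Sum.inl i))
      simpa [B, b, Matrix.mulVec, dotProduct] using this
    have h2 : q i = 0 := by
      have h1x : ∑ j, (if j = i then q j else 0) = 0 := by
        refine Eq.trans ?_ h1
        refine Finset.sum_congr rfl fun j _ => ?_
        by_cases hji : j = i <;> simp [hji, hi]
      simpa using h1x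
    simp [hqr, h2]
  have hqc : ∑ i, (c i:ℝ) * qr i = 1 := by
    have h1 : ∑ j, c j * q j = 1 := by
      have := congrFun hq (Sum.inr (Sum.inr ()))
      simpa [B, b, Matrix.mulVec, dotProduct] using this
    have : ((∑ j, c j * q j : ℚ) : ℝ) = 1 := by rw [h1]; norm_num
    push_cast at this
    simpa [hqr] using this
  have hqeq : qr = r₀ := haff qr hqA hqZ hqc
  refine ⟨r₀, fun i => ⟨q i, (congrFun hqeq i).symm⟩, hr₀0, hr₀A, hr₀Z, hr₀c, ?_⟩
  ext x
  constructor
  · intro hx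
    have hx' := hx
    rw [hP] at hx'
    obtain ⟨hx0, hxA, hxZ, hxc⟩ := hx'
    set t : ℝ := ∑ i, (c i:ℝ) * x i with htdef
    have ht1 : 1 ≤ t := hxc
    have ht0 : 0 < t := lt_of_lt_of_le one_pos ht1
    set u : Fin N → ℝ := t⁻¹ • x with hu
    have huc : ∑ i, (c i:ℝ) * u i = 1 := by
      rw [hu, sum_mul_smul' c t⁻¹ x, ← htdef, inv_mul_cancel₀ ht0.ne']
    have huP : u ∈ P := by
      rw [hP]
      refine ⟨fun i => mul_nonneg (inv_nonneg.mpr ht0.le) (hx0 i), ?_, ?_, by rw [huc]⟩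
      · rw [hu, Matrix.mulVec_smul, hxA, smul_zero]
      · intro i hi
        simp [hu, hxZ i hi]
    have hueq : u = r₀ := huniq u r₀ huP hr₀P huc hr₀c
    refine ⟨t, ht1, ?_⟩
    rw [← hueq, hu, smul_smul, mul_inv_cancel₀ ht0.ne', one_smul]
  · rintro ⟨t, ht1, rfl⟩
    rw [hP]
    have ht0 : (0:ℝ) ≤ t := le_trans zero_le_one ht1
    refine ⟨fun i => mul_nonneg ht0 (hr₀0 i), ?_, ?_, ?_⟩
    · rw [Matrix.mulVec_smul, hr₀A, smul_zero]
    · intro i hi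
      simp [hr₀Z i hi]
    · rw [sum_mul_smul' c t r₀, hr₀c, mul_one]
      exact ht1
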